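/- Let A be a Dedekind domain, let H be a commutative Hopf algebra over A that is flat as an A-module, and let W be a finite free A-module equipped with a right H-comodule structure ρ : W → W ⊗[A] H (A-linear, counital, coassociative). Let U' ⊆ W be a subcomodule, i.e. an A-submodule such that ρ maps U' into the image of U' ⊗[A] H → W ⊗[A] H. Define the saturation U = { w ∈ W : a • w ∈ U' for some nonzero a ∈ A } (equivalently, U = (U' ⊗ K) ∩ W inside W ⊗ K, where K is the fraction field of A). Then U is a direct summand of W, and U is a subcomodule of W: ρ maps U into the image of U ⊗[A] H → W ⊗[A] H. -/

import Mathlib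

open TensorProduct

theorem aux_pid_localization {A : Type*} [CommRing A] [IsDomain A] [IsDedekindDomain A]
    (P : Ideal A) [hPm : P.IsMaximal] :
    IsPrincipalIdealRing (Localization.AtPrime P) := by
  haveI : IsDomain (Localization.AtPrime P) :=
    IsLocalization.isDomain_localization P.primeCompl_le_nonZeroDivisors
  rcases eq_or_ne P ⊥ with rfl | hP
  · have hf : IsField (Localization.AtPrime (⊥ : Ideal A)) := by
      rw [IsLocalRing.isField_iff_maximalIdeal_eq, ← Localization.AtPrime.map_eq_maximalIdeal,
        Ideal.map_bot]
    letI := hf.toField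
    infer_instance
  · haveI := IsLocalization.AtPrime.isDiscreteValuationRing_of_dedekind_domain A hP
      (Localization.AtPrime P)
    infer_instance

theorem aux_nzsd_localizedModule {A : Type*} [CommRing A] [IsDomain A]
    {M : Type*} [AddCommGroup M] [Module A M] [NoZeroSMulDivisors A M]
    (P : Ideal A) [P.IsPrime] :
    NoZeroSMulDivisors (Localization.AtPrime P) (LocalizedModule P.primeCompl M) := by
  constructor
  intro c x hcx
  by_contra h
  push_neg at h
  obtain ⟨hc, hx⟩ := h
  obtain ⟨⟨r, s⟩, rfl⟩ := IsLocalization.mk'_surjective P.primeCompl c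
  dsimp only at hc hcx
  obtain ⟨⟨m, t⟩, rfl⟩ : ∃ p : M × P.primeCompl, LocalizedModule.mk p.1 p.2 = x := by
    induction x using LocalizedModule.induction_on with
    | h m t => exact ⟨⟨m, t⟩, rfl⟩
  · rw [← Localization.mk_eq_mk', LocalizedModule.mk_smul_mk] at hcx
    rw [show (0 : LocalizedModule P.primeCompl M) = LocalizedModule.mk 0 1 from
      (LocalizedModule.zero_mk 1).symm, LocalizedModule.mk_eq] at hcx
    obtain ⟨u, hu⟩ := hcx
    simp only [smul_zero, one_smul] at hu
    have hr : r ≠ 0 := by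
      rintro rfl
      exact hc (by rw [← Localization.mk_eq_mk', Localization.mk_zero])
    have hune : (u : A) ≠ 0 := fun h0 => u.2 (by rw [h0]; exact P.zero_mem)
    have hur : ((u : A) * r) • m = 0 := by
      rw [mul_smul]
      simpa [Submonoid.smul_def] using hu
    have hm : m = 0 := (smul_eq_zero.mp hur).resolve_left (mul_ne_zero hune hr)
    exact hx (by rw [hm, LocalizedModule.zero_mk])

theorem aux_projective (A : Type*) [CommRing A] [IsDomain A] [IsDedekindDomain A]
    (M : Type*) [AddCommGroup M] [Module A M] [Module.Finite A M] [NoZeroSMulDivisors A M] :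
    Module.Projective A M := by
  haveI : Module.FinitePresentation A M := Module.finitePresentation_of_finite A M
  apply Module.projective_of_localization_maximal
  intro P hP
  haveI : P.IsMaximal := hP
  haveI : IsDomain (Localization.AtPrime P) :=
    IsLocalization.isDomain_localization P.primeCompl_le_nonZeroDivisors
  haveI := aux_pid_localization P
  haveI := aux_nzsd_localizedModule (M := M) P
  haveI : Module.Free (Localization.AtPrime P) (LocalizedModule P.primeCompl M) :=
    Module.free_of_finite_type_torsion_free'
  infer_instance

/-- saturation lemma.  Over a Dedekind domain `A`, let `H` be a flat
commutative Hopf `A`-algebra and `W` a finite free `A`-module with a right `H`-comodule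
structure `ρ`.  If `U' ⊆ W` is a subcomodule and `U` is its saturation
`{ w ∈ W : a • w ∈ U' for some a ≠ 0 }`, then `U` is a direct summand of `W` and is
again a subcomodule. -/
theorem saturation_isCompl_and_subcomodule
    (A : Type*) [CommRing A] [IsDomain A] [IsDedekindDomain A]
    (H : Type*) [CommRing H] [HopfAlgebra A H] [Module.Flat A H]
    (W : Type*) [AddCommGroup W] [Module A W] [Module.Free A W] [Module.Finite A W]
    (ρ : W →ₗ[A] W ⊗[A] H)
    (hcounit : ∀ w : W,
      (TensorProduct.rid A W)
        ((LinearMap.lTensor W (Coalgebra.counit (R := A) (A := H))) (ρ w)) = w)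
    (hcoassoc :
      (TensorProduct.assoc A W H H).toLinearMap ∘ₗ (LinearMap.rTensor H ρ) ∘ₗ ρ
        = (LinearMap.lTensor W (Coalgebra.comul (R := A) (A := H))) ∘ₗ ρ)
    (U' : Submodule A W)
    (hU' : ∀ u ∈ U', ρ u ∈ LinearMap.range (LinearMap.rTensor H U'.subtype))
    (U : Submodule A W)
    (hU : ∀ w : W, w ∈ U ↔ ∃ a : A, a ≠ 0 ∧ a • w ∈ U') :
    (∃ U'' : Submodule A W, IsCompl U U'') ∧
      ∀ u ∈ U, ρ u ∈ LinearMap.range (LinearMap.rTensor H U.subtype) := by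
  have hU'leU : U' ≤ U := fun w hw => (hU w).mpr ⟨1, one_ne_zero, by simpa using hw⟩
  -- W ⧸ U is torsion-free
  haveI : NoZeroSMulDivisors A (W ⧸ U) := by
    constructor
    intro a x hax
    rcases eq_or_ne a 0 with rfl | ha
    · exact Or.inl rfl
    right
    obtain ⟨w, rfl⟩ := U.mkQ_surjective x
    rw [← map_smul, Submodule.mkQ_apply, Submodule.Quotient.mk_eq_zero] at hax
    obtain ⟨b, hb, hbw⟩ := (hU _).mp hax
    have hwU : w ∈ U := (hU w).mpr ⟨b * a, mul_ne_zero hb ha, by rwa [mul_smul]⟩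
    rw [Submodule.mkQ_apply, Submodule.Quotient.mk_eq_zero]
    exact hwU
  haveI : Module.Projective A (W ⧸ U) := aux_projective A _
  obtain ⟨g, hg⟩ := Module.projective_lifting_property U.mkQ LinearMap.id U.mkQ_surjective
  have hsection : ∀ y, U.mkQ (g y) = y := fun y => LinearMap.congr_fun hg y
  have hcompl : IsCompl U (LinearMap.range g) := by
    constructor
    · rw [disjoint_iff_inf_le]
      intro x hx
      rw [Submodule.mem_inf] at hx
      obtain ⟨hxU, y, rfl⟩ := hx
      have hy : y = 0 := by
        have h0 : U.mkQ (g y) = 0 := by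
          rw [Submodule.mkQ_apply, Submodule.Quotient.mk_eq_zero]; exact hxU
        rwa [hsection y] at h0
      simp [hy]
    · rw [codisjoint_iff_le_sup]
      intro w _
      refine Submodule.mem_sup.mpr ⟨w - g (U.mkQ w), ?_, g (U.mkQ w), ⟨U.mkQ w, rfl⟩, ?_⟩
      · rw [← Submodule.Quotient.mk_eq_zero, ← Submodule.mkQ_apply, map_sub, hsection, sub_self]
      · rw [sub_add_cancel]
  refine ⟨⟨_, hcompl⟩, ?_⟩
  -- the range of `U ⊗ H → W ⊗ H` is a "kernel" of a projection
  set f := U.projectionOnto (LinearMap.range g) hcompl with hf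
  set π : W →ₗ[A] W := LinearMap.id - U.subtype ∘ₗ f with hπ
  have hπU : π ∘ₗ U.subtype = 0 := by
    ext u
    simp [hπ, hf, Submodule.projectionOnto_apply_left]
  have key : ∀ x : W ⊗[A] H,
      x ∈ LinearMap.range (LinearMap.rTensor H U.subtype) ↔ LinearMap.rTensor H π x = 0 := by
    intro x
    constructor
    · rintro ⟨y, rfl⟩
      rw [← LinearMap.comp_apply, ← LinearMap.rTensor_comp, hπU, LinearMap.rTensor_zero]
      rfl
    · intro hx
      have hid : U.subtype ∘ₗ f + π = LinearMap.id := by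
        rw [hπ]; abel
      have : LinearMap.rTensor H (U.subtype ∘ₗ f) x + LinearMap.rTensor H π x = x := by
        rw [← LinearMap.add_apply, ← LinearMap.rTensor_add, hid, LinearMap.rTensor_id,
          LinearMap.id_apply]
      rw [hx, add_zero] at this
      refine ⟨LinearMap.rTensor H f x, ?_⟩
      rw [← LinearMap.comp_apply, ← LinearMap.rTensor_comp]
      exact this
  intro u hu_mem
  obtain ⟨a, ha, hau⟩ := (hU u).mp hu_mem
  have hrange : LinearMap.range (LinearMap.rTensor H U'.subtype) ≤
      LinearMap.range (LinearMap.rTensor H U.subtype) := by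
    have hsub : U'.subtype = U.subtype ∘ₗ Submodule.inclusion hU'leU := by ext; rfl
    rw [hsub, LinearMap.rTensor_comp]
    exact LinearMap.range_comp_le_range _ _
  have h1 : a • ρ u ∈ LinearMap.range (LinearMap.rTensor H U.subtype) := by
    have h2 := hU' _ hau
    rw [map_smul] at h2
    exact hrange h2
  have h3 : a • LinearMap.rTensor H π (ρ u) = 0 := by
    rw [← map_smul]
    exact (key _).mp h1
  -- torsion-freeness of W ⊗ H via flatness of H
  have hinj : Function.Injective
      (LinearMap.rTensor H (DistribSMul.toLinearMap A W a)) :=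
    Module.Flat.rTensor_preserves_injective_linearMap _ (smul_right_injective W ha)
  have h4 : LinearMap.rTensor H π (ρ u) = 0 := by
    apply hinj
    rw [LinearMap.rTensor_smul_action, map_zero]
    exact h3
  exact (key _).mpr h4
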